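/- For every θ with 0 ≤ θ < 1/2 and every real p > 1, the sum over natural numbers n with n < p - 1 satisfies Σ_{n ∈ ℕ, n < p-1} p^{-1/2} · exp((θ - 1/2)(n - p)² / p) ≤ ∫_{-∞}^{0} exp(-(1/2 - θ) ξ²) dξ. -/

import Mathlib

/-- For `0 ≤ θ < 1/2` and `p > 1`, the sum over natural numbers `n < p - 1` of
`p^{-1/2} exp((θ - 1/2)(n - p)²/p)` is at most `∫_{-∞}^{0} exp(-(1/2 - θ) ξ²) dξ`. -/
theorem sum_le_gaussian_integral (θ : ℝ) (hθ0 : 0 ≤ θ) (hθ : θ < 1 / 2)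
    (p : ℝ) (hp : 1 < p) :
    (∑' n : {n : ℕ // (n : ℝ) < p - 1},
        (1 / Real.sqrt p) * Real.exp ((θ - 1 / 2) * ((n : ℝ) - p) ^ 2 / p)) ≤
      ∫ ξ in Set.Iic (0 : ℝ), Real.exp (-(1 / 2 - θ) * ξ ^ 2) := by
  have hb0 : 0 < 1 / 2 - θ := by linarith
  have hp0 : 0 < p := by linarith
  have hsp0 : 0 < Real.sqrt p := Real.sqrt_pos.mpr hp0
  have hsq : Real.sqrt p ^ 2 = p := Real.sq_sqrt hp0.le
  set f : ℝ → ℝ := fun ξ => Real.exp (-(1 / 2 - θ) * ξ ^ 2) with hf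
  have hfint : MeasureTheory.Integrable f := integrable_exp_neg_mul_sq hb0
  set a : ℕ → ℝ := fun n => ((n : ℝ) - p) / Real.sqrt p with ha
  have hamono : StrictMono a := by
    intro m n hmn
    exact div_lt_div_of_pos_right (by push_cast; exact_mod_cast (by
      have : (m : ℝ) < n := by exact_mod_cast hmn
      linarith : (m : ℝ) - p < (n : ℝ) - p)) hsp0
  set S : {n : ℕ // (n : ℝ) < p - 1} → Set ℝ := fun n => Set.Ioc (a n) (a (n + 1)) with hS
  have hSm : ∀ n, MeasurableSet (S n) := fun n => measurableSet_Ioc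
  have hSd : Pairwise (Function.onFun Disjoint S) := by
    intro m n hmn
    apply Set.Ioc_disjoint_Ioc.mpr
    rcases lt_or_gt_of_ne (fun h => hmn (Subtype.ext h) : (m : ℕ) ≠ n) with h | h
    · exact le_trans (min_le_left _ _) (le_trans (hamono.monotone (by omega : (m : ℕ) + 1 ≤ n)) (le_max_right _ _))
    · exact le_trans (min_le_right _ _) (le_trans (hamono.monotone (by omega : (n : ℕ) + 1 ≤ m)) (le_max_left _ _))
  have hSsub : ∀ n : {n : ℕ // (n : ℝ) < p - 1}, S n ⊆ Set.Iic (0 : ℝ) := by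
    intro n x hx
    have h1 : ((n : ℕ) : ℝ) + 1 < p := by have := n.2; linarith
    have : a ((n : ℕ) + 1) < 0 := by
      apply div_neg_of_neg_of_pos _ hsp0
      push_cast; linarith
    exact le_of_lt (lt_of_le_of_lt hx.2 this)
  have hfnonneg : ∀ x, 0 ≤ f x := fun x => (Real.exp_pos _).le
  -- key per-term bound
  have hterm : ∀ n : {n : ℕ // (n : ℝ) < p - 1},
      (1 / Real.sqrt p) * Real.exp ((θ - 1 / 2) * ((n : ℝ) - p) ^ 2 / p) ≤
        ∫ x in S n, f x := by
    intro n
    have hvol : (MeasureTheory.volume (S n)).toReal = 1 / Real.sqrt p := by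
      rw [hS]
      rw [Real.volume_Ioc, ENNReal.toReal_ofReal (by
        have := hamono (Nat.lt_succ_self (n : ℕ)); linarith)]
      rw [ha]
      field_simp
      push_cast; ring
    have hle : ∀ x ∈ S n, Real.exp ((θ - 1 / 2) * ((n : ℝ) - p) ^ 2 / p) ≤ f x := by
      intro x hx
      have han : a (n : ℕ) < 0 :=
        div_neg_of_neg_of_pos (by have := n.2; push_cast; linarith) hsp0
      have hx0 : x ≤ 0 := hSsub n hx
      have hxsq : x ^ 2 ≤ a (n : ℕ) ^ 2 := by
        have h1 : a (n : ℕ) ≤ x := le_of_lt hx.1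
        nlinarith
      have haval : a (n : ℕ) ^ 2 = ((n : ℝ) - p) ^ 2 / p := by
        rw [ha]; rw [div_pow, hsq]
      rw [hf]
      apply Real.exp_le_exp.mpr
      have heq : (θ - 1 / 2) * ((n : ℝ) - p) ^ 2 / p = (θ - 1 / 2) * a (n : ℕ) ^ 2 := by
        rw [haval]; ring
      rw [heq]
      nlinarith [mul_le_mul_of_nonneg_left hxsq hb0.le]
    have := MeasureTheory.setIntegral_ge_of_const_le (hSm n)
      (by rw [hS, Real.volume_Ioc]; exact ENNReal.ofReal_ne_top)
      hle hfint.integrableOn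
    calc (1 / Real.sqrt p) * Real.exp ((θ - 1 / 2) * ((n : ℝ) - p) ^ 2 / p)
        = Real.exp ((θ - 1 / 2) * ((n : ℝ) - p) ^ 2 / p) * (MeasureTheory.volume (S n)).toReal := by
          rw [hvol]; ring
      _ ≤ _ := by rw [smul_eq_mul, mul_comm] at this; exact this
  have hHasSum : HasSum (fun n => ∫ x in S n, f x)
      (∫ x in ⋃ n, S n, f x) :=
    MeasureTheory.hasSum_integral_iUnion hSm hSd hfint.integrableOn
  have hgsumm : Summable (fun n => ∫ x in S n, f x) := hHasSum.summable
  have hlsumm : Summable (fun n : {n : ℕ // (n : ℝ) < p - 1} =>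
      (1 / Real.sqrt p) * Real.exp ((θ - 1 / 2) * ((n : ℝ) - p) ^ 2 / p)) := by
    apply Summable.of_nonneg_of_le (fun n => by positivity) hterm hgsumm
  calc (∑' n : {n : ℕ // (n : ℝ) < p - 1},
        (1 / Real.sqrt p) * Real.exp ((θ - 1 / 2) * ((n : ℝ) - p) ^ 2 / p))
      ≤ ∑' n, ∫ x in S n, f x := Summable.tsum_le_tsum hterm hlsumm hgsumm
    _ = ∫ x in ⋃ n, S n, f x := hHasSum.tsum_eq
    _ ≤ ∫ ξ in Set.Iic (0 : ℝ), f ξ := by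
        apply MeasureTheory.setIntegral_mono_set hfint.integrableOn
          (MeasureTheory.ae_of_all _ hfnonneg)
        exact MeasureTheory.ae_of_all _ (Set.iUnion_subset hSsub)
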